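/- Let K be an isolated non-saddle compact invariant set of a flow on a locally compact metric space. If K has an externally dissonant point, then K has a positively dissonant point and a negatively dissonant point. -/

import Mathlib

open Set Filter Topology

variable {M : Type*}

/-- The positive semi-trajectory `γ⁺(x)`. -/
def posOrbit [TopologicalSpace M] (φ : Flow ℝ M) (x : M) : Set M :=
  {y | ∃ t : ℝ, 0 ≤ t ∧ φ t x = y}

/-- The negative semi-trajectory `γ⁻(x)`. -/
def negOrbit [TopologicalSpace M] (φ : Flow ℝ M) (x : M) : Set M :=
  {y | ∃ t : ℝ, t ≤ 0 ∧ φ t x = y}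

/-- The omega-limit set `ω(x) = ⋂_{t>0} closure (x·[t,∞))`. -/
def omegaLim [TopologicalSpace M] (φ : Flow ℝ M) (x : M) : Set M :=
  ⋂ t ∈ Set.Ioi (0:ℝ), closure {y | ∃ s : ℝ, t ≤ s ∧ φ s x = y}

/-- The negative omega-limit set `ω*(x) = ⋂_{t<0} closure (x·(-∞,t])`. -/
def alphaLim [TopologicalSpace M] (φ : Flow ℝ M) (x : M) : Set M :=
  ⋂ t ∈ Set.Iio (0:ℝ), closure {y | ∃ s : ℝ, s ≤ t ∧ φ s x = y}

/-- `K` is invariant under the flow. -/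
def FlowInvariant [TopologicalSpace M] (φ : Flow ℝ M) (K : Set M) : Prop :=
  ∀ x ∈ K, ∀ t : ℝ, φ t x ∈ K

/-- `K` is a compact invariant set which is the maximal invariant subset of some
compact neighborhood (an isolated invariant compactum). -/
def IsIsolatedInv [TopologicalSpace M] (φ : Flow ℝ M) (K : Set M) : Prop :=
  IsCompact K ∧ FlowInvariant φ K ∧
    ∃ N : Set M, IsCompact N ∧ K ⊆ interior N ∧
      ∀ x ∈ N, (∀ t : ℝ, φ t x ∈ N) → x ∈ K

/-- `K` is saddle: it admits a neighborhood `U` such that every neighborhood `V` of `K`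
contains a point whose positive and negative semi-trajectories both leave `U`. -/
def Saddle [TopologicalSpace M] (φ : Flow ℝ M) (K : Set M) : Prop :=
  ∃ U : Set M, K ⊆ interior U ∧ ∀ V : Set M, K ⊆ interior V →
    ∃ x ∈ V, ¬ posOrbit φ x ⊆ U ∧ ¬ negOrbit φ x ⊆ U

/-- `K` is non-saddle: every neighborhood `U` of `K` contains a neighborhood `V` of `K`
such that every point of `V` has `γ⁺(x) ⊆ U` or `γ⁻(x) ⊆ U`. -/
def NonSaddle [TopologicalSpace M] (φ : Flow ℝ M) (K : Set M) : Prop :=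
  ∀ U : Set M, K ⊆ interior U → ∃ V : Set M, K ⊆ interior V ∧ V ⊆ U ∧
    ∀ x ∈ V, posOrbit φ x ⊆ U ∨ negOrbit φ x ⊆ U

/-- The stable manifold (region of attraction) `A(K)`. -/
def Aset [TopologicalSpace M] (φ : Flow ℝ M) (K : Set M) : Set M :=
  {x | (omegaLim φ x).Nonempty ∧ omegaLim φ x ⊆ K}

/-- The unstable manifold (region of repulsion) `R(K)`. -/
def Rset [TopologicalSpace M] (φ : Flow ℝ M) (K : Set M) : Set M :=
  {x | (alphaLim φ x).Nonempty ∧ alphaLim φ x ⊆ K}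

/-- The region of influence `I(K) = A(K) ∪ R(K)`. -/
def Iset [TopologicalSpace M] (φ : Flow ℝ M) (K : Set M) : Set M :=
  Aset φ K ∪ Rset φ K

/-- `H(K) = A(K) ∩ R(K)`. -/
def Hset [TopologicalSpace M] (φ : Flow ℝ M) (K : Set M) : Set M :=
  Aset φ K ∩ Rset φ K

/-- The positive prolongational limit set `J⁺(x)`. -/
def Jplus [TopologicalSpace M] (φ : Flow ℝ M) (x : M) : Set M :=
  {y | ∃ (xs : ℕ → M) (ts : ℕ → ℝ), Tendsto xs atTop (𝓝 x) ∧
    Tendsto ts atTop atTop ∧ Tendsto (fun n => φ (ts n) (xs n)) atTop (𝓝 y)}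

/-- The negative prolongational limit set `J⁻(x)`. -/
def Jminus [TopologicalSpace M] (φ : Flow ℝ M) (x : M) : Set M :=
  {y | ∃ (xs : ℕ → M) (ts : ℕ → ℝ), Tendsto xs atTop (𝓝 x) ∧
    Tendsto ts atTop atBot ∧ Tendsto (fun n => φ (ts n) (xs n)) atTop (𝓝 y)}

/-- The two-sided prolongational limit set `J*(x)`. -/
def Jstar [TopologicalSpace M] (φ : Flow ℝ M) (x : M) : Set (M × M) :=
  {p | ∃ (xs : ℕ → M) (ts ss : ℕ → ℝ), Tendsto xs atTop (𝓝 x) ∧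
    Tendsto ts atTop atTop ∧ Tendsto ss atTop atBot ∧
    Tendsto (fun n => φ (ts n) (xs n)) atTop (𝓝 p.1) ∧
    Tendsto (fun n => φ (ss n) (xs n)) atTop (𝓝 p.2)}

/-- `x ∈ I(K)` is positively dissonant. -/
def PosDissonant [TopologicalSpace M] (φ : Flow ℝ M) (K : Set M) (x : M) : Prop :=
  x ∈ Iset φ K ∧ x ∉ Aset φ K ∧ (Jplus φ x ∩ K).Nonempty

/-- `x ∈ I(K)` is negatively dissonant. -/
def NegDissonant [TopologicalSpace M] (φ : Flow ℝ M) (K : Set M) (x : M) : Prop :=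
  x ∈ Iset φ K ∧ x ∉ Rset φ K ∧ (Jminus φ x ∩ K).Nonempty

/-- `x ∉ I(K)` is externally dissonant. -/
def ExtDissonant [TopologicalSpace M] (φ : Flow ℝ M) (K : Set M) (x : M) : Prop :=
  x ∉ Iset φ K ∧ (Jstar φ x ∩ K ×ˢ K).Nonempty

/-- `x` is a dissonant point of `K`. -/
def Dissonant [TopologicalSpace M] (φ : Flow ℝ M) (K : Set M) (x : M) : Prop :=
  PosDissonant φ K x ∨ NegDissonant φ K x ∨ ExtDissonant φ K x

/-- `N` is an isolating block for `K` with entrance set `Ni` and exit set `No`. -/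
structure IsolatingBlock [TopologicalSpace M] (φ : Flow ℝ M) (K N Ni No : Set M) : Prop where
  compact_N : IsCompact N
  nbhd : K ⊆ interior N
  maximal : ∀ x ∈ N, (∀ t : ℝ, φ t x ∈ N) → x ∈ K
  compact_Ni : IsCompact Ni
  compact_No : IsCompact No
  Ni_sub : Ni ⊆ frontier N
  No_sub : No ⊆ frontier N
  cover : frontier N = Ni ∪ No
  entrance : ∀ x ∈ Ni, ∃ ε > (0:ℝ), ∀ t ∈ Set.Ico (-ε) (0:ℝ), φ t x ∉ N
  exitSet : ∀ x ∈ No, ∃ δ > (0:ℝ), ∀ t ∈ Set.Ioc (0:ℝ) δ, φ t x ∉ N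
  tang_neg : ∀ x ∈ frontier N \ Ni, ∃ ε > (0:ℝ), ∀ t ∈ Set.Ico (-ε) (0:ℝ), φ t x ∈ interior N
  tang_pos : ∀ x ∈ frontier N \ No, ∃ δ > (0:ℝ), ∀ t ∈ Set.Ioc (0:ℝ) δ, φ t x ∈ interior N

/-- `p` is strongly influenced by `K`. -/
def StronglyInfluenced [TopologicalSpace M] (φ : Flow ℝ M) (K : Set M) (p : M) : Prop :=
  ∃ U ∈ 𝓝 p, ∀ V : Set M, K ⊆ interior V → ∃ T : ℝ, 0 ≤ T ∧ ∀ x ∈ U,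
    (∀ t : ℝ, T ≤ t → φ t x ∈ V) ∨ (∀ t : ℝ, t ≤ -T → φ t x ∈ V)

/-- `p` is strongly attracted by `K`. -/
def StronglyAttracted [TopologicalSpace M] (φ : Flow ℝ M) (K : Set M) (p : M) : Prop :=
  ∃ U ∈ 𝓝 p, ∀ V : Set M, K ⊆ interior V → ∃ T : ℝ, 0 ≤ T ∧ ∀ x ∈ U,
    ∀ t : ℝ, T ≤ t → φ t x ∈ V

/-- `p` is strongly repelled by `K`. -/
def StronglyRepelled [TopologicalSpace M] (φ : Flow ℝ M) (K : Set M) (p : M) : Prop :=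
  ∃ U ∈ 𝓝 p, ∀ V : Set M, K ⊆ interior V → ∃ T : ℝ, 0 ≤ T ∧ ∀ x ∈ U,
    ∀ t : ℝ, t ≤ -T → φ t x ∈ V

/-- `K` is (positively) stable. -/
def IsStable [TopologicalSpace M] (φ : Flow ℝ M) (K : Set M) : Prop :=
  ∀ U : Set M, K ⊆ interior U → ∃ V : Set M, K ⊆ interior V ∧ V ⊆ U ∧
    ∀ x ∈ V, ∀ t : ℝ, 0 ≤ t → φ t x ∈ V

/-- `K` is negatively stable. -/
def IsNegStable [TopologicalSpace M] (φ : Flow ℝ M) (K : Set M) : Prop :=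
  ∀ U : Set M, K ⊆ interior U → ∃ V : Set M, K ⊆ interior V ∧ V ⊆ U ∧
    ∀ x ∈ V, ∀ t : ℝ, t ≤ 0 → φ t x ∈ V

/-- `K` is an attractor: stable and attracting some neighborhood. -/
def IsAttractor [TopologicalSpace M] (φ : Flow ℝ M) (K : Set M) : Prop :=
  IsStable φ K ∧ ∃ W : Set M, K ⊆ interior W ∧ W ⊆ Aset φ K

/-- `K` is a repeller: negatively stable and repelling some neighborhood. -/
def IsRepeller [TopologicalSpace M] (φ : Flow ℝ M) (K : Set M) : Prop :=
  IsNegStable φ K ∧ ∃ W : Set M, K ⊆ interior W ∧ W ⊆ Rset φ K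

section DissonantAux

variable [MetricSpace M] (φ : Flow ℝ M)

/-- forward tail of the orbit -/
def fwdTail (x : M) (t : ℝ) : Set M := {y | ∃ s : ℝ, t ≤ s ∧ φ s x = y}

/-- backward tail of the orbit -/
def bwdTail (x : M) (t : ℝ) : Set M := {y | ∃ s : ℝ, s ≤ t ∧ φ s x = y}

lemma flow_comp (t s : ℝ) (x : M) : φ t (φ s x) = φ (t + s) x := (φ.map_add t s x).symm

lemma fwdTail_mono (x : M) {t t' : ℝ} (h : t ≤ t') : fwdTail φ x t' ⊆ fwdTail φ x t :=
  fun _ ⟨s, hs, he⟩ => ⟨s, h.trans hs, he⟩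

lemma bwdTail_mono (x : M) {t t' : ℝ} (h : t ≤ t') : bwdTail φ x t ⊆ bwdTail φ x t' :=
  fun _ ⟨s, hs, he⟩ => ⟨s, hs.trans h, he⟩

lemma omegaLim_eq (x : M) : omegaLim φ x = ⋂ t : ℝ, closure (fwdTail φ x t) := by
  apply Set.Subset.antisymm
  · intro w hw
    rw [Set.mem_iInter]
    intro t
    have h1 : w ∈ closure (fwdTail φ x (max t 1)) :=
      Set.mem_iInter₂.1 hw (max t 1) (lt_of_lt_of_le one_pos (le_max_right t 1))
    exact closure_mono (fwdTail_mono φ x (le_max_left _ _)) h1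
  · intro w hw
    rw [omegaLim, Set.mem_iInter₂]
    intro t _
    exact Set.mem_iInter.1 hw t

lemma alphaLim_eq (x : M) : alphaLim φ x = ⋂ t : ℝ, closure (bwdTail φ x t) := by
  apply Set.Subset.antisymm
  · intro w hw
    rw [Set.mem_iInter]
    intro t
    have h1 : w ∈ closure (bwdTail φ x (min t (-1))) :=
      Set.mem_iInter₂.1 hw (min t (-1))
        (lt_of_le_of_lt (min_le_right t (-1)) (by norm_num))
    exact closure_mono (bwdTail_mono φ x (min_le_left _ _)) h1
  · intro w hw
    rw [alphaLim, Set.mem_iInter₂]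
    intro t _
    exact Set.mem_iInter.1 hw t

lemma fwdTail_shift (x : M) (r t : ℝ) : fwdTail φ (φ r x) t = fwdTail φ x (t + r) := by
  ext y
  constructor
  · rintro ⟨s, hs, rfl⟩
    exact ⟨s + r, by linarith, by rw [← flow_comp]⟩
  · rintro ⟨s, hs, rfl⟩
    exact ⟨s - r, by linarith, by rw [flow_comp, sub_add_cancel]⟩

lemma bwdTail_shift (x : M) (r t : ℝ) : bwdTail φ (φ r x) t = bwdTail φ x (t + r) := by
  ext y
  constructor
  · rintro ⟨s, hs, rfl⟩
    exact ⟨s + r, by linarith, by rw [← flow_comp]⟩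
  · rintro ⟨s, hs, rfl⟩
    exact ⟨s - r, by linarith, by rw [flow_comp, sub_add_cancel]⟩

lemma omegaLim_shift (x : M) (r : ℝ) : omegaLim φ (φ r x) = omegaLim φ x := by
  rw [omegaLim_eq, omegaLim_eq]
  ext w
  simp only [Set.mem_iInter]
  constructor
  · intro h t
    have := h (t - r)
    rwa [fwdTail_shift, sub_add_cancel] at this
  · intro h t
    rw [fwdTail_shift]
    exact h (t + r)

lemma alphaLim_shift (x : M) (r : ℝ) : alphaLim φ (φ r x) = alphaLim φ x := by
  rw [alphaLim_eq, alphaLim_eq]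
  ext w
  simp only [Set.mem_iInter]
  constructor
  · intro h t
    have := h (t - r)
    rwa [bwdTail_shift, sub_add_cancel] at this
  · intro h t
    rw [bwdTail_shift]
    exact h (t + r)

lemma flow_cont (t : ℝ) : Continuous fun x : M => φ t x := φ.continuous_toFun t

lemma omegaLim_inv (x : M) (r : ℝ) {w : M} (hw : w ∈ omegaLim φ x) :
    φ r w ∈ omegaLim φ x := by
  rw [omegaLim_eq] at hw ⊢
  rw [Set.mem_iInter]
  intro t
  have h1 : w ∈ closure (fwdTail φ x (t - r)) := Set.mem_iInter.1 hw (t - r)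
  have h2 : φ r w ∈ closure ((fun y => φ r y) '' fwdTail φ x (t - r)) :=
    image_closure_subset_closure_image (flow_cont φ r) ⟨w, h1, rfl⟩
  refine closure_mono ?_ h2
  rintro y ⟨u, ⟨s, hs, rfl⟩, rfl⟩
  exact ⟨r + s, by linarith, by rw [← flow_comp]⟩

lemma alphaLim_inv (x : M) (r : ℝ) {w : M} (hw : w ∈ alphaLim φ x) :
    φ r w ∈ alphaLim φ x := by
  rw [alphaLim_eq] at hw ⊢
  rw [Set.mem_iInter]
  intro t
  have h1 : w ∈ closure (bwdTail φ x (t - r)) := Set.mem_iInter.1 hw (t - r)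
  have h2 : φ r w ∈ closure ((fun y => φ r y) '' bwdTail φ x (t - r)) :=
    image_closure_subset_closure_image (flow_cont φ r) ⟨w, h1, rfl⟩
  refine closure_mono ?_ h2
  rintro y ⟨u, ⟨s, hs, rfl⟩, rfl⟩
  exact ⟨r + s, by linarith, by rw [← flow_comp]⟩

lemma mem_Aset_of_forward {K N C : Set M} (hC : IsCompact C) (hCN : C ⊆ N)
    (hmax : ∀ x ∈ N, (∀ t : ℝ, φ t x ∈ N) → x ∈ K) {x : M}
    (hx : ∀ t : ℝ, 0 ≤ t → φ t x ∈ C) : x ∈ Aset φ K := by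
  have hsub : ∀ t : ℝ, 0 ≤ t → closure (fwdTail φ x t) ⊆ C := by
    intro t ht
    refine closure_minimal ?_ hC.isClosed
    rintro y ⟨s, hs, rfl⟩
    exact hx s (ht.trans hs)
  have hωC : omegaLim φ x ⊆ C := by
    rw [omegaLim_eq]
    exact (Set.iInter_subset _ (0 : ℝ)).trans (hsub 0 le_rfl)
  have hne : (omegaLim φ x).Nonempty := by
    rw [omegaLim_eq]
    have hZsub : (⋂ t : ℝ, closure (fwdTail φ x (max t 0))) ⊆
        ⋂ t : ℝ, closure (fwdTail φ x t) :=
      Set.iInter_mono fun t => closure_mono (fwdTail_mono φ x (le_max_left _ _))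
    refine Set.Nonempty.mono hZsub ?_
    apply IsCompact.nonempty_iInter_of_directed_nonempty_isCompact_isClosed
    · intro a b
      refine ⟨max a b, closure_mono (fwdTail_mono φ x (max_le_max (le_max_left a b) le_rfl)),
        closure_mono (fwdTail_mono φ x (max_le_max (le_max_right a b) le_rfl))⟩
    · intro t
      exact ⟨φ (max t 0) x, subset_closure ⟨max t 0, le_rfl, rfl⟩⟩
    · intro t
      exact hC.of_isClosed_subset isClosed_closure (hsub (max t 0) (le_max_right _ _))
    · intro t
      exact isClosed_closure
  refine ⟨hne, fun w hw => ?_⟩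
  exact hmax w (hCN (hωC hw)) fun t => hCN (hωC (omegaLim_inv φ x t hw))

lemma mem_Rset_of_backward {K N C : Set M} (hC : IsCompact C) (hCN : C ⊆ N)
    (hmax : ∀ x ∈ N, (∀ t : ℝ, φ t x ∈ N) → x ∈ K) {x : M}
    (hx : ∀ t : ℝ, t ≤ 0 → φ t x ∈ C) : x ∈ Rset φ K := by
  have hsub : ∀ t : ℝ, t ≤ 0 → closure (bwdTail φ x t) ⊆ C := by
    intro t ht
    refine closure_minimal ?_ hC.isClosed
    rintro y ⟨s, hs, rfl⟩
    exact hx s (hs.trans ht)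
  have hαC : alphaLim φ x ⊆ C := by
    rw [alphaLim_eq]
    exact (Set.iInter_subset _ (0 : ℝ)).trans (hsub 0 le_rfl)
  have hne : (alphaLim φ x).Nonempty := by
    rw [alphaLim_eq]
    have hZsub : (⋂ t : ℝ, closure (bwdTail φ x (min t 0))) ⊆
        ⋂ t : ℝ, closure (bwdTail φ x t) :=
      Set.iInter_mono fun t => closure_mono (bwdTail_mono φ x (min_le_left _ _))
    refine Set.Nonempty.mono hZsub ?_
    apply IsCompact.nonempty_iInter_of_directed_nonempty_isCompact_isClosed
    · intro a b
      refine ⟨min a b, closure_mono (bwdTail_mono φ x (min_le_min (min_le_left a b) le_rfl)),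
        closure_mono (bwdTail_mono φ x (min_le_min (min_le_right a b) le_rfl))⟩
    · intro t
      exact ⟨φ (min t 0) x, subset_closure ⟨min t 0, le_rfl, rfl⟩⟩
    · intro t
      exact hC.of_isClosed_subset isClosed_closure (hsub (min t 0) (min_le_right _ _))
    · intro t
      exact isClosed_closure
  refine ⟨hne, fun w hw => ?_⟩
  exact hmax w (hCN (hαC hw)) fun t => hCN (hαC (alphaLim_inv φ x t hw))

end DissonantAux

/-- if `K` has an externally dissonant point, it has positively and
negatively dissonant points. -/
theorem stmt15 {M : Type*} [MetricSpace M] [LocallyCompactSpace M]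
    (φ : Flow ℝ M) (K : Set M)
    (hIso : IsIsolatedInv φ K) (hNS : NonSaddle φ K)
    (hext : ∃ x : M, ExtDissonant φ K x) :
    (∃ y : M, PosDissonant φ K y) ∧ (∃ z : M, NegDissonant φ K z) := by
  obtain ⟨hKcomp, hKinv, N, hNcomp, hKintN, hNmax⟩ := hIso
  obtain ⟨x, hxI, ⟨⟨y, z⟩, hyzJ, hyzK⟩⟩ := hext
  obtain ⟨xs, ts, ss, hxs, hts, hss, hy, hz⟩ := hyzJ
  have hyK : y ∈ K := hyzK.1
  have hzK : z ∈ K := hyzK.2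
  -- first neighborhood from non-saddleness
  obtain ⟨V1, hKV1, hV1N, htri1⟩ := hNS N hKintN
  have hV1I : V1 ⊆ Iset φ K := by
    intro v hv
    rcases htri1 v hv with h | h
    · exact Or.inl (mem_Aset_of_forward φ hNcomp Set.Subset.rfl hNmax
        fun t ht => h ⟨t, ht, rfl⟩)
    · exact Or.inr (mem_Rset_of_backward φ hNcomp Set.Subset.rfl hNmax
        fun t ht => h ⟨t, ht, rfl⟩)
  -- compact neighborhood W2 inside V1
  obtain ⟨W2, hW2comp, hKW2, hW2V1⟩ := exists_compact_between hKcomp isOpen_interior hKV1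
  have hW2closed : IsClosed W2 := hW2comp.isClosed
  have hW2N : W2 ⊆ N := (hW2V1.trans interior_subset).trans hV1N
  have hxW2 : x ∉ W2 := fun h => hxI (hV1I (interior_subset (hW2V1 h)))
  -- second neighborhood from non-saddleness
  obtain ⟨V3, hKV3, hV3W2, htri3⟩ := hNS W2 hKW2
  -- eventual properties, then shift indices
  have hE : ∀ᶠ n in atTop, xs n ∉ W2 ∧ φ (ss n) (xs n) ∈ interior V3 ∧ ss n ≤ 0 ∧
      φ (ts n) (xs n) ∈ interior V3 ∧ 0 ≤ ts n := by
    have e1 : ∀ᶠ n in atTop, xs n ∉ W2 := hxs (hW2closed.isOpen_compl.mem_nhds hxW2)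
    have e2 : ∀ᶠ n in atTop, φ (ss n) (xs n) ∈ interior V3 :=
      hz (isOpen_interior.mem_nhds (hKV3 hzK))
    have e3 : ∀ᶠ n in atTop, ss n ≤ 0 := hss.eventually_le_atBot 0
    have e4 : ∀ᶠ n in atTop, φ (ts n) (xs n) ∈ interior V3 :=
      hy (isOpen_interior.mem_nhds (hKV3 hyK))
    have e5 : ∀ᶠ n in atTop, 0 ≤ ts n := hts.eventually_ge_atTop 0
    exact e1.and (e2.and (e3.and (e4.and e5)))
  obtain ⟨n₀, hn₀⟩ := eventually_atTop.1 hE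
  set X : ℕ → M := fun n => xs (n + n₀) with hXdef
  set Ts : ℕ → ℝ := fun n => ts (n + n₀) with hTsdef
  set Ss : ℕ → ℝ := fun n => ss (n + n₀) with hSsdef
  have hX : Tendsto X atTop (𝓝 x) := hxs.comp (tendsto_add_atTop_nat n₀)
  have hTs : Tendsto Ts atTop atTop := hts.comp (tendsto_add_atTop_nat n₀)
  have hSs : Tendsto Ss atTop atBot := hss.comp (tendsto_add_atTop_nat n₀)
  have hYt : Tendsto (fun n => φ (Ts n) (X n)) atTop (𝓝 y) :=
    hy.comp (tendsto_add_atTop_nat n₀)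
  have hZt : Tendsto (fun n => φ (Ss n) (X n)) atTop (𝓝 z) :=
    hz.comp (tendsto_add_atTop_nat n₀)
  have hP : ∀ n, X n ∉ W2 ∧ φ (Ss n) (X n) ∈ interior V3 ∧ Ss n ≤ 0 ∧
      φ (Ts n) (X n) ∈ interior V3 ∧ 0 ≤ Ts n :=
    fun n => hn₀ (n + n₀) (Nat.le_add_left _ _)
  -- whole backward orbit before time `Ss n` lies in W2
  have hback : ∀ n, ∀ t : ℝ, t ≤ Ss n → φ t (X n) ∈ W2 := by
    intro n t ht
    obtain ⟨h1, h2, h3, -, -⟩ := hP n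
    rcases htri3 _ (interior_subset h2) with hpos | hneg
    · refine absurd (hpos ⟨-Ss n, by linarith, ?_⟩) h1
      rw [flow_comp, neg_add_cancel, φ.map_zero_apply]
    · have := hneg ⟨t - Ss n, by linarith, rfl⟩
      rwa [flow_comp, sub_add_cancel] at this
  -- whole forward orbit after time `Ts n` lies in W2
  have hfwd : ∀ n, ∀ t : ℝ, Ts n ≤ t → φ t (X n) ∈ W2 := by
    intro n t ht
    obtain ⟨h1, -, -, h4, h5⟩ := hP n
    rcases htri3 _ (interior_subset h4) with hpos | hneg
    · have := hpos ⟨t - Ts n, by linarith, rfl⟩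
      rwa [flow_comp, sub_add_cancel] at this
    · refine absurd (hneg ⟨-Ts n, by linarith, ?_⟩) h1
      rw [flow_comp, neg_add_cancel, φ.map_zero_apply]
  ---------------------------------------------------------------
  -- PART 1 : positively dissonant point
  ---------------------------------------------------------------
  have part1 : ∃ q : M, PosDissonant φ K q := by
    set S : ℕ → Set ℝ := fun n => {t | Ss n ≤ t ∧ t ≤ 0 ∧ φ t (X n) ∉ W2} with hSdef
    have hS0 : ∀ n, (0 : ℝ) ∈ S n := by
      intro n
      refine ⟨(hP n).2.2.1, le_rfl, ?_⟩
      rw [φ.map_zero_apply]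
      exact (hP n).1
    have hSbdd : ∀ n, BddBelow (S n) := fun n => ⟨Ss n, fun t ht => ht.1⟩
    set ρ : ℕ → ℝ := fun n => sInf (S n) with hρdef
    have hρ_le : ∀ n, ρ n ≤ 0 := fun n => csInf_le (hSbdd n) (hS0 n)
    have hbelow : ∀ n, ∀ t : ℝ, t < ρ n → φ t (X n) ∈ W2 := by
      intro n t ht
      rcases le_or_gt t (Ss n) with h | h
      · exact hback n t h
      · by_contra hc
        exact absurd (csInf_le (hSbdd n) ⟨h.le, by linarith [hρ_le n], hc⟩) (not_le.2 ht)
    set Q : ℕ → M := fun n => φ (ρ n) (X n) with hQdef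
    have hQW2 : ∀ n, Q n ∈ W2 := by
      intro n
      have hcont : Tendsto (fun t : ℝ => φ t (X n)) (𝓝[<] ρ n) (𝓝 (Q n)) :=
        ((φ.continuous continuous_id continuous_const).tendsto (ρ n)).mono_left
          nhdsWithin_le_nhds
      exact hW2closed.mem_of_tendsto hcont
        (eventually_nhdsWithin_of_forall fun t ht => hbelow n t ht)
    have hτ : ∀ n, ∃ τ : ℝ, τ ∈ S n ∧ τ < ρ n + 1 / (n + 1) := by
      intro n
      exact exists_lt_of_csInf_lt ⟨0, hS0 n⟩ (lt_add_of_pos_right (ρ n) (by positivity))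
    choose τ hτS hτlt using hτ
    obtain ⟨q, hqW2mem, g, hg, hQg⟩ := hW2comp.tendsto_subseq hQW2
    -- q has its whole backward orbit inside W2
    have hqneg : ∀ t : ℝ, t ≤ 0 → φ t q ∈ W2 := by
      intro t ht
      rcases ht.lt_or_eq with ht' | rfl
      · have hlim : Tendsto (fun n => φ t (Q (g n))) atTop (𝓝 (φ t q)) :=
          ((flow_cont φ t).tendsto q).comp hQg
        refine hW2closed.mem_of_tendsto hlim (Eventually.of_forall fun n => ?_)
        have he : φ t (Q (g n)) = φ (t + ρ (g n)) (X (g n)) := flow_comp φ _ _ _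
        rw [he]
        exact hbelow (g n) _ (by linarith)
      · rw [φ.map_zero_apply]
        exact hqW2mem
    have hqR : q ∈ Rset φ K := mem_Rset_of_backward φ hW2comp hW2N hNmax hqneg
    have hyJ : y ∈ Jplus φ q := by
      refine ⟨fun n => Q (g n), fun n => Ts (g n) - ρ (g n), hQg, ?_, ?_⟩
      · refine tendsto_atTop_mono (fun n => ?_) (hTs.comp hg.tendsto_atTop)
        have := hρ_le (g n)
        simp only [Function.comp]
        linarith
      · have he : (fun n => φ (Ts (g n) - ρ (g n)) (Q (g n))) =
            fun n => φ (Ts (g n)) (X (g n)) := by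
          funext n
          rw [hQdef]
          rw [flow_comp, sub_add_cancel]
        rw [he]
        exact hYt.comp hg.tendsto_atTop
    -- q is not attracted to K
    have hqA : q ∉ Aset φ K := by
      rintro ⟨hωne, hωK⟩
      obtain ⟨w, hw⟩ := id hωne
      have hw1 : w ∈ closure (fwdTail φ q 1) :=
        Set.mem_iInter₂.1 hw 1 (by norm_num)
      obtain ⟨T, hT1, hTmem⟩ : ∃ T : ℝ, 1 ≤ T ∧ φ T q ∈ interior V3 := by
        obtain ⟨u, huV3, hus⟩ := (_root_.mem_closure_iff.1 hw1) (interior V3)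
          isOpen_interior (hKV3 (hωK hw))
        obtain ⟨s, hs1, rfl⟩ := hus
        exact ⟨s, hs1, huV3⟩
      by_cases hcase : ∀ᶠ n in atTop, ρ (g n) < -T
      · have hev2 : ∀ᶠ n in atTop, φ T (Q (g n)) ∈ interior V3 :=
          (((flow_cont φ T).tendsto q).comp hQg) (isOpen_interior.mem_nhds hTmem)
        obtain ⟨n, hρn, hθn⟩ := (hcase.and hev2).exists
        have hθeq : φ T (Q (g n)) = φ (T + ρ (g n)) (X (g n)) := flow_comp φ _ _ _
        rcases htri3 _ (interior_subset hθn) with hpos | hneg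
        · refine (hP (g n)).1 (?_ : X (g n) ∈ W2)
          have h1 := hpos ⟨-ρ (g n) - T, by linarith, rfl⟩
          rwa [hθeq, flow_comp, show -ρ (g n) - T + (T + ρ (g n)) = 0 by ring,
            φ.map_zero_apply] at h1
        · have hm1 : (1 : ℝ) / (g n + 1) ≤ 1 := by
            rw [div_le_one (by positivity)]
            simp
          have h2 : τ (g n) - ρ (g n) - T ≤ 0 := by
            have := hτlt (g n)
            linarith
          have h1 := hneg ⟨τ (g n) - ρ (g n) - T, h2, rfl⟩
          rw [hθeq, flow_comp, show τ (g n) - ρ (g n) - T + (T + ρ (g n)) = τ (g n) by ring]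
            at h1
          exact (hτS (g n)).2.2 h1
      · rw [Filter.not_eventually] at hcase
        have hfreq : ∃ᶠ n in atTop, ρ (g n) ∈ Set.Icc (-T) 0 :=
          hcase.mono fun n hn => ⟨not_lt.1 hn, hρ_le _⟩
        obtain ⟨g2, hg2, hg2mem⟩ := Filter.extraction_of_frequently_atTop hfreq
        obtain ⟨rst, hrstmem, g3, hg3, hρlim⟩ :=
          (isCompact_Icc (a := -T) (b := 0)).tendsto_subseq hg2mem
        set m : ℕ → ℕ := fun k => g (g2 (g3 k)) with hmdef
        have hmt : Tendsto m atTop atTop := (hg.comp (hg2.comp hg3)).tendsto_atTop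
        have hXlim : Tendsto (fun k => X (m k)) atTop (𝓝 x) := hX.comp hmt
        have hρlim' : Tendsto (fun k => ρ (m k)) atTop (𝓝 rst) := hρlim
        have hQlim2 : Tendsto (fun k => Q (m k)) atTop (𝓝 q) :=
          hQg.comp (hg2.comp hg3).tendsto_atTop
        have hQlim3 : Tendsto (fun k => Q (m k)) atTop (𝓝 (φ rst x)) :=
          (φ.cont'.tendsto (rst, x)).comp (hρlim'.prodMk_nhds hXlim)
        have hqeq : q = φ rst x := tendsto_nhds_unique hQlim2 hQlim3
        have hxA : x ∈ Aset φ K := by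
          rw [hqeq, omegaLim_shift] at hωne hωK
          exact ⟨hωne, hωK⟩
        exact hxI (Or.inl hxA)
    exact ⟨q, Or.inr hqR, hqA, ⟨y, hyJ, hyK⟩⟩
  ---------------------------------------------------------------
  -- PART 2 : negatively dissonant point
  ---------------------------------------------------------------
  have part2 : ∃ p : M, NegDissonant φ K p := by
    set S' : ℕ → Set ℝ := fun n => {t | 0 ≤ t ∧ t ≤ Ts n ∧ φ t (X n) ∉ W2} with hS'def
    have hS0 : ∀ n, (0 : ℝ) ∈ S' n := by
      intro n
      refine ⟨le_rfl, (hP n).2.2.2.2, ?_⟩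
      rw [φ.map_zero_apply]
      exact (hP n).1
    have hSbdd : ∀ n, BddAbove (S' n) := fun n => ⟨Ts n, fun t ht => ht.2.1⟩
    set r : ℕ → ℝ := fun n => sSup (S' n) with hrdef
    have hr_ge : ∀ n, 0 ≤ r n := fun n => le_csSup (hSbdd n) (hS0 n)
    have habove : ∀ n, ∀ t : ℝ, r n < t → φ t (X n) ∈ W2 := by
      intro n t ht
      rcases le_or_gt (Ts n) t with h | h
      · exact hfwd n t h
      · by_contra hc
        exact absurd (le_csSup (hSbdd n) ⟨by linarith [hr_ge n], h.le, hc⟩) (not_le.2 ht)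
    set P : ℕ → M := fun n => φ (r n) (X n) with hPdef
    have hPW2 : ∀ n, P n ∈ W2 := by
      intro n
      have hcont : Tendsto (fun t : ℝ => φ t (X n)) (𝓝[>] r n) (𝓝 (P n)) :=
        ((φ.continuous continuous_id continuous_const).tendsto (r n)).mono_left
          nhdsWithin_le_nhds
      exact hW2closed.mem_of_tendsto hcont
        (eventually_nhdsWithin_of_forall fun t ht => habove n t ht)
    have hτ : ∀ n, ∃ τ : ℝ, τ ∈ S' n ∧ r n - 1 / (n + 1) < τ := by
      intro n
      exact exists_lt_of_lt_csSup ⟨0, hS0 n⟩ (by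
        have : (0:ℝ) < 1 / (n + 1) := by positivity
        linarith)
    choose τ hτS hτlt using hτ
    obtain ⟨p, hpW2mem, g, hg, hPg⟩ := hW2comp.tendsto_subseq hPW2
    have hppos : ∀ t : ℝ, 0 ≤ t → φ t p ∈ W2 := by
      intro t ht
      rcases ht.lt_or_eq with ht' | rfl
      · have hlim : Tendsto (fun n => φ t (P (g n))) atTop (𝓝 (φ t p)) :=
          ((flow_cont φ t).tendsto p).comp hPg
        refine hW2closed.mem_of_tendsto hlim (Eventually.of_forall fun n => ?_)
        have he : φ t (P (g n)) = φ (t + r (g n)) (X (g n)) := flow_comp φ _ _ _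
        rw [he]
        exact habove (g n) _ (by linarith)
      · rw [φ.map_zero_apply]
        exact hpW2mem
    have hpA : p ∈ Aset φ K := mem_Aset_of_forward φ hW2comp hW2N hNmax hppos
    have hzJ : z ∈ Jminus φ p := by
      refine ⟨fun n => P (g n), fun n => Ss (g n) - r (g n), hPg, ?_, ?_⟩
      · refine tendsto_atBot_mono (fun n => ?_) (hSs.comp hg.tendsto_atTop)
        have := hr_ge (g n)
        simp only [Function.comp]
        linarith
      · have he : (fun n => φ (Ss (g n) - r (g n)) (P (g n))) =
            fun n => φ (Ss (g n)) (X (g n)) := by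
          funext n
          rw [hPdef]
          rw [flow_comp, sub_add_cancel]
        rw [he]
        exact hZt.comp hg.tendsto_atTop
    have hpR : p ∉ Rset φ K := by
      rintro ⟨hαne, hαK⟩
      obtain ⟨w, hw⟩ := id hαne
      have hw1 : w ∈ closure (bwdTail φ p (-1)) :=
        Set.mem_iInter₂.1 hw (-1) (by norm_num)
      obtain ⟨T, hT1, hTmem⟩ : ∃ T : ℝ, 1 ≤ T ∧ φ (-T) p ∈ interior V3 := by
        obtain ⟨u, huV3, hus⟩ := (_root_.mem_closure_iff.1 hw1) (interior V3)
          isOpen_interior (hKV3 (hαK hw))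
        obtain ⟨s, hs1, rfl⟩ := hus
        exact ⟨-s, by linarith, by rw [neg_neg]; exact huV3⟩
      by_cases hcase : ∀ᶠ n in atTop, T < r (g n)
      · have hev2 : ∀ᶠ n in atTop, φ (-T) (P (g n)) ∈ interior V3 :=
          (((flow_cont φ (-T)).tendsto p).comp hPg) (isOpen_interior.mem_nhds hTmem)
        obtain ⟨n, hrn, hθn⟩ := (hcase.and hev2).exists
        have hθeq : φ (-T) (P (g n)) = φ (-T + r (g n)) (X (g n)) := flow_comp φ _ _ _
        rcases htri3 _ (interior_subset hθn) with hpos | hneg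
        · have hm1 : (1 : ℝ) / (g n + 1) ≤ 1 := by
            rw [div_le_one (by positivity)]
            simp
          have h2 : 0 ≤ τ (g n) + T - r (g n) := by
            have := hτlt (g n)
            linarith
          have h1 := hpos ⟨τ (g n) + T - r (g n), h2, rfl⟩
          rw [hθeq, flow_comp,
            show τ (g n) + T - r (g n) + (-T + r (g n)) = τ (g n) by ring] at h1
          exact (hτS (g n)).2.2 h1
        · refine (hP (g n)).1 (?_ : X (g n) ∈ W2)
          have h1 := hneg ⟨T - r (g n), by linarith, rfl⟩
          rwa [hθeq, flow_comp, show T - r (g n) + (-T + r (g n)) = 0 by ring,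
            φ.map_zero_apply] at h1
      · rw [Filter.not_eventually] at hcase
        have hfreq : ∃ᶠ n in atTop, r (g n) ∈ Set.Icc 0 T :=
          hcase.mono fun n hn => ⟨hr_ge _, not_lt.1 hn⟩
        obtain ⟨g2, hg2, hg2mem⟩ := Filter.extraction_of_frequently_atTop hfreq
        obtain ⟨rst, hrstmem, g3, hg3, hρlim⟩ :=
          (isCompact_Icc (a := 0) (b := T)).tendsto_subseq hg2mem
        set m : ℕ → ℕ := fun k => g (g2 (g3 k)) with hmdef
        have hmt : Tendsto m atTop atTop := (hg.comp (hg2.comp hg3)).tendsto_atTop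
        have hXlim : Tendsto (fun k => X (m k)) atTop (𝓝 x) := hX.comp hmt
        have hρlim' : Tendsto (fun k => r (m k)) atTop (𝓝 rst) := hρlim
        have hPlim2 : Tendsto (fun k => P (m k)) atTop (𝓝 p) :=
          hPg.comp (hg2.comp hg3).tendsto_atTop
        have hPlim3 : Tendsto (fun k => P (m k)) atTop (𝓝 (φ rst x)) :=
          (φ.cont'.tendsto (rst, x)).comp (hρlim'.prodMk_nhds hXlim)
        have hpeq : p = φ rst x := tendsto_nhds_unique hPlim2 hPlim3
        have hxR : x ∈ Rset φ K := by
          rw [hpeq, alphaLim_shift] at hαne hαK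
          exact ⟨hαne, hαK⟩
        exact hxI (Or.inr hxR)
    exact ⟨p, Or.inl hpA, hpR, ⟨z, hzJ, hzK⟩⟩
  exact ⟨part1, part2⟩
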